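/- Weak tropical Nullstellensatz: let 𝔞 be a finitely generated ideal of the commutative semiring 𝕋[x_1,…,x_n] with 𝔞 ≠ 𝕋[x_1,…,x_n]. Then Z(𝔞) = {a ∈ 𝕋^n : f(a) ∈ 𝕌̄ for all f ∈ 𝔞} is nonempty. Equivalently, if a finitely generated ideal 𝔞 satisfies Z(𝔞) = ∅, then 𝔞 = 𝕋[x_1,…,x_n]. -/

import Mathlib

/-- The extended tropical semiring `𝕋`: tangible reals `(a, false)`,
ghost reals `(a, true)`, and `none` = `-∞`. -/
def T : Type := Option (ℝ × Bool)

namespace T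

/-- The tangible element of value `a`. -/
def tang (a : ℝ) : T := some (a, false)

/-- The ghost element `a^ν` of value `a`. -/
def ghost (a : ℝ) : T := some (a, true)

/-- Tropical addition on `𝕋`. -/
noncomputable def add : T → T → T
  | none, y => y
  | some p, none => some p
  | some (a, s), some (b, t) =>
      if a < b then some (b, t) else if b < a then some (a, s) else some (a, true)

/-- Tropical multiplication on `𝕋`. -/
noncomputable def mul : T → T → T
  | none, _ => none
  | some _, none => none
  | some (a, s), some (b, t) => some (a + b, s || t)

lemma add_assoc' : ∀ x y z : T, add (add x y) z = add x (add y z) := by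
  rintro (_ | ⟨a, s⟩) (_ | ⟨b, t⟩) (_ | ⟨c, u⟩) <;>
    simp only [add] <;>
    (try delta T) <;>
    (try split_ifs) <;>
    simp only [add] <;>
    (try delta T) <;>
    (try split_ifs) <;>
    first
      | rfl
      | (exfalso; linarith)
      | (refine congrArg some ?_; refine Prod.ext ?_ ?_ <;>
          first | rfl | linarith | simp)

lemma add_comm' : ∀ x y : T, add x y = add y x := by
  rintro (_ | ⟨a, s⟩) (_ | ⟨b, t⟩) <;>
    simp only [add] <;>
    (try delta T) <;>
    (try split_ifs) <;>
    first
      | rfl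
      | (exfalso; linarith)
      | (refine congrArg some ?_; refine Prod.ext ?_ ?_ <;>
          first | rfl | linarith | simp)

lemma mul_assoc' : ∀ x y z : T, mul (mul x y) z = mul x (mul y z) := by
  rintro (_ | ⟨a, s⟩) (_ | ⟨b, t⟩) (_ | ⟨c, u⟩) <;>
    simp [mul, add_assoc, Bool.or_assoc] <;> rfl

lemma mul_comm' : ∀ x y : T, mul x y = mul y x := by
  rintro (_ | ⟨a, s⟩) (_ | ⟨b, t⟩) <;> simp [mul, add_comm, Bool.or_comm] <;> rfl

lemma left_distrib' : ∀ x y z : T, mul x (add y z) = add (mul x y) (mul x z) := by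
  rintro (_ | ⟨a, s⟩) (_ | ⟨b, t⟩) (_ | ⟨c, u⟩) <;>
    simp only [add, mul] <;>
    (try delta T) <;>
    (try split_ifs) <;>
    simp only [add, mul] <;>
    (try delta T) <;>
    (try split_ifs) <;>
    first
      | rfl
      | (exfalso; linarith)
      | (refine congrArg some ?_; refine Prod.ext ?_ ?_ <;>
          first | rfl | linarith | simp)

noncomputable instance : Zero T := ⟨none⟩
noncomputable instance : One T := ⟨some (0, false)⟩
noncomputable instance : Add T := ⟨add⟩
noncomputable instance : Mul T := ⟨mul⟩

noncomputable instance : CommSemiring T where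
  add := (· + ·)
  zero := 0
  add_assoc := add_assoc'
  zero_add := fun x => by cases x <;> rfl
  add_zero := fun x => by cases x <;> rfl
  add_comm := add_comm'
  mul := (· * ·)
  one := 1
  mul_assoc := mul_assoc'
  one_mul := fun x => by
    show mul (some (0, false)) x = x
    rcases x with _ | ⟨a, s⟩ <;> simp [mul] <;> rfl
  mul_one := fun x => by
    show mul x (some (0, false)) = x
    rcases x with _ | ⟨a, s⟩ <;> simp [mul] <;> rfl
  mul_comm := mul_comm'
  zero_mul := fun x => by cases x <;> rfl
  mul_zero := fun x => by cases x <;> rfl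
  left_distrib := left_distrib'
  right_distrib := fun x y z => by
    show mul (add x y) z = add (mul x z) (mul y z)
    rw [mul_comm', left_distrib', mul_comm' z x, mul_comm' z y]
  nsmul := nsmulRec

/-- Membership in the ghost part `𝕌̄ = 𝕌 ∪ {-∞}` of `𝕋`. -/
def isGhost : T → Prop
  | none => True
  | some (_, s) => s = true

/-- Membership in the tangible part `ℝ ∪ {-∞}` of `𝕋`. -/
def isTangible : T → Prop
  | none => True
  | some (_, s) => s = false

/-- The underlying real value (junk value `0` at `-∞`); this is `π` on elements `≠ -∞`. -/
def val : T → ℝ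
  | none => 0
  | some (a, _) => a

/-- The ghost map `ν`. -/
def nu : T → T
  | none => none
  | some (a, _) => some (a, true)

end T

namespace T

/-- The model value in the half line `[0,∞)`: `-∞ ↦ 0`, an element of value `a ↦ exp a`. -/
noncomputable def gval : T → ℝ
  | none => 0
  | some (a, _) => Real.exp a

lemma nu_isGhost : ∀ x : T, isGhost (nu x)
  | none => trivial
  | some (_, _) => rfl

lemma gval_injOn_tang : Set.InjOn gval {x : T | isTangible x} := by
  rintro (_ | ⟨a, s⟩) hx (_ | ⟨b, t⟩) hy h <;>
    simp only [gval, Set.mem_setOf_eq, isTangible] at hx hy h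
  · rfl
  · exact absurd h.symm (Real.exp_pos b).ne'
  · exact absurd h (Real.exp_pos a).ne'
  · rw [Real.exp_eq_exp] at h; subst hx; subst hy; subst h; rfl

lemma gval_injOn_ghost : Set.InjOn gval {x : T | isGhost x} := by
  rintro (_ | ⟨a, s⟩) hx (_ | ⟨b, t⟩) hy h <;>
    simp only [gval, Set.mem_setOf_eq, isGhost] at hx hy h
  · rfl
  · exact absurd h.symm (Real.exp_pos b).ne'
  · exact absurd h (Real.exp_pos a).ne'
  · rw [Real.exp_eq_exp] at h; subst hx; subst hy; subst h; rfl

lemma gval_image_tang : gval '' {x : T | isTangible x} = Set.Ici 0 := by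
  ext y
  constructor
  · rintro ⟨(_ | ⟨a, s⟩), hx, rfl⟩
    · exact Set.self_mem_Ici
    · exact le_of_lt (by simpa [gval] using Real.exp_pos a)
  · intro hy
    rcases eq_or_lt_of_le (Set.mem_Ici.mp hy : (0 : ℝ) ≤ y) with h | h
    · exact ⟨none, trivial, h⟩
    · exact ⟨some (Real.log y, false), rfl, by simp [gval, Real.exp_log h]⟩

lemma gval_image_ghost : gval '' {x : T | isGhost x} = Set.Ici 0 := by
  ext y
  constructor
  · rintro ⟨(_ | ⟨a, s⟩), hx, rfl⟩
    · exact Set.self_mem_Ici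
    · exact le_of_lt (by simpa [gval] using Real.exp_pos a)
  · intro hy
    rcases eq_or_lt_of_le (Set.mem_Ici.mp hy : (0 : ℝ) ≤ y) with h | h
    · exact ⟨none, trivial, h⟩
    · exact ⟨some (Real.log y, true), rfl, by simp [gval, Real.exp_log h]⟩

/-- The closed sets of the topology on `𝕋`: both the tangible and the ghost layers are
closed in the model `[0,∞)` of `𝕌̄`, and the ghost image of the tangible layer is
contained in the set. -/
def TIsClosed (W : Set T) : Prop :=
  IsClosed (gval '' (W ∩ {x | isTangible x})) ∧
  IsClosed (gval '' (W ∩ {x | isGhost x})) ∧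
  nu '' (W ∩ {x | isTangible x}) ⊆ W ∩ {x | isGhost x}

/-- The topology on `𝕋`. -/
noncomputable instance : TopologicalSpace T :=
  TopologicalSpace.ofClosed {W | TIsClosed W}
    (by
      refine ⟨?_, ?_, ?_⟩ <;> simp [TIsClosed])
    (fun A hA => by
      rcases A.eq_empty_or_nonempty with rfl | hne
      · rw [Set.sInter_empty]
        refine ⟨?_, ?_, ?_⟩
        · rw [Set.univ_inter, gval_image_tang]; exact isClosed_Ici
        · rw [Set.univ_inter, gval_image_ghost]; exact isClosed_Ici
        · rintro y ⟨x, ⟨-, _⟩, rfl⟩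
          exact ⟨trivial, nu_isGhost x⟩
      · have : Nonempty A := hne.to_subtype
        have h1 : (⋂₀ A) ∩ {x : T | isTangible x}
            = ⋂ (W : A), ((W : Set T) ∩ {x | isTangible x}) := by
          ext x
          simp only [Set.mem_inter_iff, Set.mem_sInter, Set.mem_iInter, Set.mem_setOf_eq]
          constructor
          · rintro ⟨h, ht⟩ W; exact ⟨h W W.2, ht⟩
          · intro h
            obtain ⟨W, hW⟩ := hne
            exact ⟨fun V hV => (h ⟨V, hV⟩).1, (h ⟨W, hW⟩).2⟩
        have h2 : (⋂₀ A) ∩ {x : T | isGhost x}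
            = ⋂ (W : A), ((W : Set T) ∩ {x | isGhost x}) := by
          ext x
          simp only [Set.mem_inter_iff, Set.mem_sInter, Set.mem_iInter, Set.mem_setOf_eq]
          constructor
          · rintro ⟨h, ht⟩ W; exact ⟨h W W.2, ht⟩
          · intro h
            obtain ⟨W, hW⟩ := hne
            exact ⟨fun V hV => (h ⟨V, hV⟩).1, (h ⟨W, hW⟩).2⟩
        refine ⟨?_, ?_, ?_⟩
        · rw [h1, Set.InjOn.image_iInter_eq
            (gval_injOn_tang.mono (Set.iUnion_subset fun W => Set.inter_subset_right))]
          exact isClosed_iInter fun W => (hA W.2).1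
        · rw [h2, Set.InjOn.image_iInter_eq
            (gval_injOn_ghost.mono (Set.iUnion_subset fun W => Set.inter_subset_right))]
          exact isClosed_iInter fun W => (hA W.2).2.1
        · rintro y ⟨x, ⟨hx, hxt⟩, rfl⟩
          refine ⟨fun W hW => ((hA hW).2.2 ⟨x, ⟨hx W hW, hxt⟩, rfl⟩).1, nu_isGhost x⟩)
    (fun A hA B hB => by
      have h1 : (A ∪ B) ∩ {x : T | isTangible x}
          = (A ∩ {x | isTangible x}) ∪ (B ∩ {x | isTangible x}) :=
        Set.union_inter_distrib_right A B _
      have h2 : (A ∪ B) ∩ {x : T | isGhost x}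
          = (A ∩ {x | isGhost x}) ∪ (B ∩ {x | isGhost x}) :=
        Set.union_inter_distrib_right A B _
      refine ⟨?_, ?_, ?_⟩
      · rw [h1, Set.image_union]; exact hA.1.union hB.1
      · rw [h2, Set.image_union]; exact hA.2.1.union hB.2.1
      · rintro y ⟨x, ⟨hx, hxt⟩, rfl⟩
        rcases hx with hxA | hxB
        · have h := hA.2.2 ⟨x, ⟨hxA, hxt⟩, rfl⟩
          exact ⟨Or.inl h.1, h.2⟩
        · have h := hB.2.2 ⟨x, ⟨hxB, hxt⟩, rfl⟩
          exact ⟨Or.inr h.1, h.2⟩)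

end T

namespace T

lemma some_ne_zero (p : ℝ × Bool) : (some p : T) ≠ (0 : T) := fun h => Option.some_ne_none p h

lemma isGhost_mul_right (x y : T) (h : isGhost y) : isGhost (x * y) := by
  show isGhost (T.mul x y)
  rcases x with _ | ⟨a, s⟩ <;> rcases y with _ | ⟨b, u⟩
  · trivial
  · trivial
  · trivial
  · have hu : u = true := h
    subst hu
    show (s || true) = true
    simp

lemma isGhost_add (x y : T) (hx : isGhost x) (hy : isGhost y) : isGhost (x + y) := by
  show isGhost (T.add x y)
  rcases x with _ | ⟨a, s⟩ <;> rcases y with _ | ⟨b, u⟩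
  · trivial
  · exact hy
  · exact hx
  · have hs : s = true := hx
    have hu : u = true := hy
    subst hs; subst hu
    simp only [T.add]
    delta T
    split_ifs <;> rfl

lemma ghost_add_eq (x y : T) (hx : isGhost x)
    (hy : y = 0 ∨ (x ≠ 0 ∧ val y ≤ val x)) : x + y = x := by
  rcases hy with rfl | ⟨hx0, hle⟩
  · exact add_zero x
  · show T.add x y = x
    rcases x with _ | ⟨a, s⟩
    · exact absurd rfl hx0
    · have hs : s = true := hx
      subst hs
      rcases y with _ | ⟨b, u⟩
      · rfl
      · have hb : b ≤ a := hle
        simp only [T.add]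
        delta T
        split_ifs with h1 h2
        · exact absurd h1 (not_lt.mpr hb)
        · rfl
        · rfl

lemma ghost_add_sum {ι : Type*} (s : Finset ι) (g : ι → T) (x : T) (hx : isGhost x)
    (h : ∀ j ∈ s, g j = 0 ∨ (x ≠ 0 ∧ val (g j) ≤ val x)) :
    x + ∑ j ∈ s, g j = x := by
  classical
  induction s using Finset.induction_on with
  | empty => simp
  | @insert a s ha ih =>
    rw [Finset.sum_insert ha, ← add_assoc,
      ghost_add_eq x (g a) hx (h a (Finset.mem_insert_self a s))]
    exact ih (fun j hj => h j (Finset.mem_insert_of_mem hj))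

lemma ghost_pow (t : ℝ) (k : ℕ) :
    (ghost t : T) ^ k = if k = 0 then (1 : T) else (some ((k : ℝ) * t, true) : T) := by
  induction k with
  | zero => rw [pow_zero]; exact (if_pos rfl).symm
  | succ k ih =>
    rw [pow_succ, ih]
    delta T
    rw [if_neg (Nat.add_one_ne_zero k)]
    rcases eq_or_ne k 0 with rfl | hk
    · rw [if_pos rfl]
      show T.mul (some (0, false)) (some (t, true)) = _
      simp only [T.mul]
      norm_num
      rfl
    · rw [if_neg hk]
      show T.mul (some ((k : ℝ) * t, true)) (some (t, true)) = _
      simp only [T.mul, Bool.or_true]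
      refine congrArg some (Prod.ext ?_ rfl)
      push_cast
      ring

lemma mul_ghost_pow (x : T) (hx : x ≠ 0) (t : ℝ) (k : ℕ) :
    ∃ b : Bool, x * (ghost t : T) ^ k = (some (x.val + (k : ℝ) * t, b) : T) ∧ (k ≠ 0 → b = true) := by
  rcases x with _ | ⟨c, s⟩
  · exact absurd rfl hx
  rw [ghost_pow]
  delta T
  rcases eq_or_ne k 0 with rfl | hk
  · refine ⟨s, ?_, fun h => absurd rfl h⟩
    rw [if_pos rfl]
    show T.mul (some (c, s)) (some (0, false)) = _
    simp only [T.mul, Bool.or_false]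
    refine congrArg some (Prod.ext ?_ rfl)
    show c + 0 = c + (0 : ℕ) * t
    norm_num
  · refine ⟨true, ?_, fun _ => rfl⟩
    rw [if_neg hk]
    show T.mul (some (c, s)) (some ((k : ℝ) * t, true)) = _
    simp only [T.mul, Bool.or_true]
    rfl

lemma tang_mul_tang (a b : ℝ) : (tang a) * (tang b) = tang (a + b) := rfl

lemma isUnit_tang (a : ℝ) : IsUnit (tang a) :=
  IsUnit.of_mul_eq_one (tang (-a)) (by rw [tang_mul_tang, add_neg_cancel]; rfl)

end T
open MvPolynomial in
lemma T.key_lemma (n : ℕ) (f : MvPolynomial (Fin n) T) :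
    IsUnit f ∨ ∃ t₀ : ℝ, ∀ t ≥ t₀, T.isGhost (MvPolynomial.eval (fun _ => T.ghost t) f) := by
  classical
  by_cases hsup : ∀ v ∈ f.support, v = 0
  · rcases Finset.subset_singleton_iff.mp
        (fun v hv => Finset.mem_singleton.mpr (hsup v hv)) with hemp | hsing
    · right
      refine ⟨0, fun t _ => ?_⟩
      rw [MvPolynomial.support_eq_empty.mp hemp, map_zero]
      trivial
    · have hf : f = C (coeff 0 f) := by
        conv_lhs => rw [f.as_sum]
        rw [hsing, Finset.sum_singleton, MvPolynomial.monomial_zero']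
      have h0mem : (0 : Fin n →₀ ℕ) ∈ f.support := by
        rw [hsing]; exact Finset.mem_singleton_self 0
      have h0 : coeff 0 f ≠ 0 := MvPolynomial.mem_support_iff.mp h0mem
      rcases hc : coeff 0 f with _ | ⟨c, b⟩
      · exact absurd hc h0
      cases b with
      | true =>
        right
        refine ⟨0, fun t _ => ?_⟩
        rw [hf, eval_C, hc]
        rfl
      | false =>
        left
        rw [hf, hc]
        exact (T.isUnit_tang c).map (C : T →+* MvPolynomial (Fin n) T)
  · push_neg at hsup
    obtain ⟨m', hm's, hm'0⟩ := hsup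
    right
    set D := f.support.sup (fun v => ∑ i, v i) with hD
    have hdm' : (∑ i, m' i) ≠ 0 := by
      intro h
      apply hm'0
      ext i
      exact Finset.sum_eq_zero_iff.mp h i (Finset.mem_univ i)
    have hD1 : 1 ≤ D :=
      le_trans (Nat.one_le_iff_ne_zero.mpr hdm') (Finset.le_sup (f := fun v => ∑ i, v i) hm's)
    have hexmax : (f.support.filter (fun v => (∑ i, v i) = D)).Nonempty := by
      obtain ⟨m, hm, hmeq⟩ := Finset.exists_mem_eq_sup f.support ⟨m', hm's⟩
        (fun v => ∑ i, v i)
      exact ⟨m, Finset.mem_filter.mpr ⟨hm, hmeq.symm⟩⟩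
    obtain ⟨m, hmf, hmax⟩ :=
      Finset.exists_max_image _ (fun v => (coeff v f).val) hexmax
    have hmsup : m ∈ f.support := (Finset.mem_filter.mp hmf).1
    have hmD : (∑ i, m i) = D := (Finset.mem_filter.mp hmf).2
    refine ⟨(∑ v ∈ f.support, |(coeff v f).val - (coeff m f).val|) ⊔ 0, fun t ht => ?_⟩
    have ht0 : (0 : ℝ) ≤ t := le_trans le_sup_right ht
    have htv : ∀ v ∈ f.support, (coeff v f).val - (coeff m f).val ≤ t := by
      intro v hv
      calc (coeff v f).val - (coeff m f).val ≤ |(coeff v f).val - (coeff m f).val| :=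
            le_abs_self _
        _ ≤ ∑ v ∈ f.support, |(coeff v f).val - (coeff m f).val| :=
            Finset.single_le_sum (f := fun v => |(coeff v f).val - (coeff m f).val|) (fun i _ => abs_nonneg _) hv
        _ ≤ t := le_trans le_sup_left ht
    have heval : MvPolynomial.eval (fun _ => T.ghost t) f
        = ∑ d ∈ f.support, coeff d f * (T.ghost t : T) ^ (∑ i, d i) := by
      rw [MvPolynomial.eval_eq']
      exact Finset.sum_congr rfl fun d _ => by
        rw [Finset.prod_pow_eq_pow_sum]
    rw [heval, ← Finset.add_sum_erase _ (fun d => coeff d f * (T.ghost t : T) ^ (∑ i, d i))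
      hmsup]
    have hcm0 : coeff m f ≠ 0 := MvPolynomial.mem_support_iff.mp hmsup
    obtain ⟨b, hXeq, hbtrue⟩ := T.mul_ghost_pow _ hcm0 t (∑ i, m i)
    have hb : b = true := hbtrue (by rw [hmD]; exact Nat.one_le_iff_ne_zero.mp hD1)
    subst hb
    have hXg : T.isGhost (coeff m f * (T.ghost t : T) ^ (∑ i, m i)) := by
      rw [hXeq]; exact rfl
    rw [T.ghost_add_sum _ _ _ hXg ?_]
    · exact hXg
    · intro v hv
      have hvs : v ∈ f.support := Finset.mem_of_mem_erase hv
      have hcv0 : coeff v f ≠ 0 := MvPolynomial.mem_support_iff.mp hvs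
      obtain ⟨bv, hveq, -⟩ := T.mul_ghost_pow _ hcv0 t (∑ i, v i)
      right
      refine ⟨by rw [hXeq]; exact T.some_ne_zero _, ?_⟩
      rw [hXeq, hveq]
      show (coeff v f).val + ((∑ i, v i : ℕ) : ℝ) * t
          ≤ (coeff m f).val + ((∑ i, m i : ℕ) : ℝ) * t
      have hdv : (∑ i, v i) ≤ D := Finset.le_sup (f := fun v => ∑ i, v i) hvs
      rcases eq_or_lt_of_le hdv with heq | hlt
      · have hle := hmax v (Finset.mem_filter.mpr ⟨hvs, heq⟩)
        rw [heq, hmD]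
        linarith
      · have h1 : ((∑ i, v i : ℕ) : ℝ) + 1 ≤ (D : ℝ) := by exact_mod_cast hlt
        have h2 := htv v hvs
        rw [hmD]
        nlinarith [mul_nonneg (by linarith : (0:ℝ) ≤ (D : ℝ) - ((∑ i, v i : ℕ) : ℝ) - 1) ht0]

lemma finset_exists_bound {α : Type*} (s : Finset α) (P : α → ℝ → Prop)
    (h : ∀ f ∈ s, ∃ t₀, ∀ t ≥ t₀, P f t) : ∃ t₀, ∀ t ≥ t₀, ∀ f ∈ s, P f t := by
  classical
  induction s using Finset.induction_on with
  | empty => exact ⟨0, by simp⟩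
  | @insert a s ha ih =>
    obtain ⟨t₁, h₁⟩ := h a (Finset.mem_insert_self a s)
    obtain ⟨t₂, h₂⟩ := ih (fun f hf => h f (Finset.mem_insert_of_mem hf))
    refine ⟨max t₁ t₂, fun t ht f hf => ?_⟩
    rcases Finset.mem_insert.mp hf with rfl | hf
    · exact h₁ t (le_trans (le_max_left _ _) ht)
    · exact h₂ t (le_trans (le_max_right _ _) ht) f hf
/-- Weak tropical Nullstellensatz: a finitely generated proper ideal
of `𝕋[x_1,…,x_n]` has a nonempty tropical algebraic set. -/
theorem tropical_weak_nullstellensatz (n : ℕ) (I : Ideal (MvPolynomial (Fin n) T))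
    (hfg : I.FG) (hproper : I ≠ ⊤) :
    ∃ a : Fin n → T, ∀ f ∈ I, T.isGhost (MvPolynomial.eval a f) := by
  classical
  obtain ⟨s, hspan⟩ := hfg
  have hgen : ∀ g ∈ s, ∃ t₀ : ℝ, ∀ t ≥ t₀,
      T.isGhost (MvPolynomial.eval (fun _ => T.ghost t) g) := by
    intro g hg
    rcases T.key_lemma n g with hu | h
    · exact absurd (Ideal.eq_top_of_isUnit_mem I
        (hspan ▸ Ideal.subset_span hg) hu) hproper
    · exact h
  obtain ⟨t₀, ht₀⟩ := finset_exists_bound s _ hgen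
  refine ⟨fun _ => T.ghost t₀, fun f hf => ?_⟩
  rw [← hspan] at hf
  obtain ⟨g, -, hg⟩ := Submodule.mem_span_finset.mp hf
  rw [← hg, map_sum]
  refine Finset.sum_induction _ T.isGhost (fun a b => T.isGhost_add a b) trivial ?_
  intro p hp
  rw [smul_eq_mul, map_mul]
  exact T.isGhost_mul_right _ _ (ht₀ t₀ le_rfl p hp)
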